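/- Let (x(·), u(·), ψ₀, ψ(·)) be a Pontryagin extremal of the problem of minimizing ∫_a^b (u₁² + u₂²) dt subject to ẋ₁ = x₃, ẋ₂ = x₄, ẋ₃ = −x₁(x₁²+x₂²) + u₁, ẋ₄ = −x₂(x₁²+x₂²) + u₂ (Ω = ℝ²). Then the angular-momentum-type quantity F(t) = −ψ₁(t)x₂(t) + ψ₂(t)x₁(t) − ψ₃(t)x₄(t) + ψ₄(t)x₃(t) is constant on [a,b]. -/

import Mathlib

open Set MeasureTheory

/-- `f` is absolutely continuous on `[a,b]`. -/
def AbsContOn (a b : ℝ) (f : ℝ → ℝ) : Prop :=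
  ∀ ε > 0, ∃ δ > 0, ∀ (n : ℕ) (c d : Fin n → ℝ),
    (∀ j, a ≤ c j ∧ c j ≤ d j ∧ d j ≤ b) →
    (Pairwise fun i j => Disjoint (Set.Ioo (c i) (d i)) (Set.Ioo (c j) (d j))) →
    (∑ j, (d j - c j)) ≤ δ → (∑ j, |f (d j) - f (c j)|) ≤ ε

/-- Hamiltonian of the 4-state, 2-control problem
`∫ (u₁² + u₂²) dt → min`, `ẋ₁ = x₃`, `ẋ₂ = x₄`,
`ẋ₃ = -x₁(x₁²+x₂²) + u₁`, `ẋ₄ = -x₂(x₁²+x₂²) + u₂`, `Ω = ℝ²`. -/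
noncomputable def H7 (x1 x2 x3 x4 u1 u2 p0 p1 p2 p3 p4 : ℝ) : ℝ :=
  p0 * (u1 ^ 2 + u2 ^ 2) + p1 * x3 + p2 * x4
    + p3 * (-x1 * (x1 ^ 2 + x2 ^ 2) + u1) + p4 * (-x2 * (x1 ^ 2 + x2 ^ 2) + u2)

/-- Pontryagin extremal of the above problem on `[a,b]`: the Hamiltonian system
(with the partial derivatives of `H7` computed explicitly) and the maximality
condition over `Ω = ℝ²` hold a.e. -/
def IsExtremal8 (a b : ℝ) (x1 x2 x3 x4 u1 u2 : ℝ → ℝ) (p0 : ℝ)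
    (p1 p2 p3 p4 : ℝ → ℝ) : Prop :=
  AbsContOn a b x1 ∧ AbsContOn a b x2 ∧ AbsContOn a b x3 ∧ AbsContOn a b x4 ∧
  AbsContOn a b p1 ∧ AbsContOn a b p2 ∧ AbsContOn a b p3 ∧ AbsContOn a b p4 ∧
  Measurable u1 ∧ Measurable u2 ∧ (∃ M, ∀ t, |u1 t| ≤ M ∧ |u2 t| ≤ M) ∧
  p0 ≤ 0 ∧
  ¬(p0 = 0 ∧ ∀ t ∈ Set.Icc a b, p1 t = 0 ∧ p2 t = 0 ∧ p3 t = 0 ∧ p4 t = 0) ∧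
  (∀ᵐ t : ℝ, t ∈ Set.Icc a b →
    HasDerivAt x1 (x3 t) t ∧ HasDerivAt x2 (x4 t) t ∧
    HasDerivAt x3 (-(x1 t) * ((x1 t) ^ 2 + (x2 t) ^ 2) + u1 t) t ∧
    HasDerivAt x4 (-(x2 t) * ((x1 t) ^ 2 + (x2 t) ^ 2) + u2 t) t ∧
    HasDerivAt p1 (p3 t * (3 * (x1 t) ^ 2 + (x2 t) ^ 2)
      + 2 * p4 t * (x1 t) * (x2 t)) t ∧
    HasDerivAt p2 (2 * p3 t * (x1 t) * (x2 t)
      + p4 t * ((x1 t) ^ 2 + 3 * (x2 t) ^ 2)) t ∧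
    HasDerivAt p3 (-(p1 t)) t ∧ HasDerivAt p4 (-(p2 t)) t ∧
    ∀ v1 v2 : ℝ, H7 (x1 t) (x2 t) (x3 t) (x4 t) v1 v2 p0 (p1 t) (p2 t) (p3 t) (p4 t)
      ≤ H7 (x1 t) (x2 t) (x3 t) (x4 t) (u1 t) (u2 t) p0 (p1 t) (p2 t) (p3 t) (p4 t))

lemma AbsContOn.bound {a b : ℝ} {f : ℝ → ℝ} (hab : a ≤ b) (hf : AbsContOn a b f) :
    ∃ C, 0 ≤ C ∧ ∀ t ∈ Icc a b, |f t| ≤ C := by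
  obtain ⟨δ, hδ, h⟩ := hf 1 one_pos
  have step : ∀ s u : ℝ, a ≤ s → s ≤ u → u ≤ b → u - s ≤ δ → |f u - f s| ≤ 1 := by
    intro s u has hsu hub hd
    have := h 1 (fun _ => s) (fun _ => u) (fun _ => ⟨has, hsu, hub⟩)
      (fun i j hij => absurd (Subsingleton.elim i j) hij) (by simp; linarith)
    simpa using this
  have key : ∀ n : ℕ, ∀ t, a ≤ t → t ≤ b → t - a ≤ n * δ → |f t - f a| ≤ n := by
    intro n
    induction n with
    | zero =>
      intro t h1 h2 h3
      have : t = a := by push_cast at h3; linarith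
      simp [this]
    | succ n ih =>
      intro t h1 h2 h3
      by_cases hc : t - a ≤ δ
      · have := step a t le_rfl h1 h2 hc
        push_cast
        linarith [(Nat.cast_nonneg n : (0:ℝ) ≤ (n:ℝ))]
      · push_neg at hc
        set s := t - δ with hs
        have hsa : a ≤ s := by simp [hs]; linarith
        have h4 : s - a ≤ n * δ := by push_cast at h3; simp [hs]; linarith
        have h5 := ih s hsa (by simp [hs]; linarith) h4
        have h6 := step s t hsa (by simp [hs]; linarith) h2 (by simp [hs])
        have h7 : |f t - f a| ≤ |f t - f s| + |f s - f a| := abs_sub_le _ _ _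
        push_cast
        linarith
  refine ⟨|f a| + ⌈(b - a)/δ⌉₊, by positivity, fun t ht => ?_⟩
  have h3 : t - a ≤ (⌈(b-a)/δ⌉₊ : ℝ) * δ := by
    have h4 := Nat.le_ceil ((b-a)/δ)
    have h5 : (b - a)/δ * δ = b - a := div_mul_cancel₀ _ (ne_of_gt hδ)
    nlinarith [ht.2, ht.1]
  have h6 := key _ t ht.1 ht.2 h3
  have h7 : |f t| ≤ |f a| + |f t - f a| := by
    have := abs_add_le (f a) (f t - f a); simpa using this
  linarith

lemma AbsContOn.neg {a b : ℝ} {f : ℝ → ℝ} (hf : AbsContOn a b f) :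
    AbsContOn a b (fun t => -f t) := by
  intro ε hε
  obtain ⟨δ, hδ, h⟩ := hf ε hε
  refine ⟨δ, hδ, fun n c d h1 h2 h3 => ?_⟩
  have he : ∀ j : Fin n, |-f (d j) - -f (c j)| = |f (d j) - f (c j)| := by
    intro j; rw [show -f (d j) - -f (c j) = -(f (d j) - f (c j)) by ring, abs_neg]
  rw [Finset.sum_congr rfl fun j _ => he j]
  exact h n c d h1 h2 h3

lemma AbsContOn.add {a b : ℝ} {f g : ℝ → ℝ} (hf : AbsContOn a b f) (hg : AbsContOn a b g) :
    AbsContOn a b (fun t => f t + g t) := by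
  intro ε hε
  obtain ⟨δ1, hδ1, h1⟩ := hf (ε/2) (by positivity)
  obtain ⟨δ2, hδ2, h2⟩ := hg (ε/2) (by positivity)
  refine ⟨min δ1 δ2, lt_min hδ1 hδ2, fun n c d hcd hdisj hsum => ?_⟩
  have hf' := h1 n c d hcd hdisj (hsum.trans (min_le_left _ _))
  have hg' := h2 n c d hcd hdisj (hsum.trans (min_le_right _ _))
  calc ∑ j, |f (d j) + g (d j) - (f (c j) + g (c j))|
      ≤ ∑ j, (|f (d j) - f (c j)| + |g (d j) - g (c j)|) := by
        refine Finset.sum_le_sum fun j _ => ?_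
        have := abs_add_le (f (d j) - f (c j)) (g (d j) - g (c j))
        calc |f (d j) + g (d j) - (f (c j) + g (c j))|
            = |(f (d j) - f (c j)) + (g (d j) - g (c j))| := by ring_nf
          _ ≤ _ := this
    _ = (∑ j, |f (d j) - f (c j)|) + ∑ j, |g (d j) - g (c j)| := Finset.sum_add_distrib
    _ ≤ ε/2 + ε/2 := add_le_add hf' hg'
    _ = ε := by ring

lemma AbsContOn.sub {a b : ℝ} {f g : ℝ → ℝ} (hf : AbsContOn a b f) (hg : AbsContOn a b g) :
    AbsContOn a b (fun t => f t - g t) := by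
  have := hf.add hg.neg
  simpa [sub_eq_add_neg] using this

lemma AbsContOn.mul {a b : ℝ} {f g : ℝ → ℝ} (hab : a ≤ b)
    (hf : AbsContOn a b f) (hg : AbsContOn a b g) :
    AbsContOn a b (fun t => f t * g t) := by
  obtain ⟨Cf, hCf0, hCf⟩ := hf.bound hab
  obtain ⟨Cg, hCg0, hCg⟩ := hg.bound hab
  set C := Cf + Cg + 1 with hC
  have hCpos : 0 < C := by positivity
  intro ε hε
  obtain ⟨δ1, hδ1, h1⟩ := hf (ε/(2*C)) (by positivity)
  obtain ⟨δ2, hδ2, h2⟩ := hg (ε/(2*C)) (by positivity)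
  refine ⟨min δ1 δ2, lt_min hδ1 hδ2, fun n c d hcd hdisj hsum => ?_⟩
  have hf' := h1 n c d hcd hdisj (hsum.trans (min_le_left _ _))
  have hg' := h2 n c d hcd hdisj (hsum.trans (min_le_right _ _))
  calc ∑ j, |f (d j) * g (d j) - f (c j) * g (c j)|
      ≤ ∑ j, (C * |g (d j) - g (c j)| + C * |f (d j) - f (c j)|) := by
        refine Finset.sum_le_sum fun j _ => ?_
        have hdj : d j ∈ Icc a b := ⟨(hcd j).1.trans (hcd j).2.1, (hcd j).2.2⟩
        have hcj : c j ∈ Icc a b := ⟨(hcd j).1, (hcd j).2.1.trans (hcd j).2.2⟩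
        have e1 : f (d j) * g (d j) - f (c j) * g (c j)
            = f (d j) * (g (d j) - g (c j)) + g (c j) * (f (d j) - f (c j)) := by ring
        rw [e1]
        calc |f (d j) * (g (d j) - g (c j)) + g (c j) * (f (d j) - f (c j))|
            ≤ |f (d j) * (g (d j) - g (c j))| + |g (c j) * (f (d j) - f (c j))| := abs_add_le _ _
          _ = |f (d j)| * |g (d j) - g (c j)| + |g (c j)| * |f (d j) - f (c j)| := by
              rw [abs_mul, abs_mul]
          _ ≤ C * |g (d j) - g (c j)| + C * |f (d j) - f (c j)| := by
              have := hCf (d j) hdj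
              have := hCg (c j) hcj
              have := abs_nonneg (g (d j) - g (c j))
              have := abs_nonneg (f (d j) - f (c j))
              apply add_le_add <;> apply mul_le_mul_of_nonneg_right <;>
                first | linarith | assumption
    _ = C * (∑ j, |g (d j) - g (c j)|) + C * ∑ j, |f (d j) - f (c j)| := by
        rw [Finset.sum_add_distrib, Finset.mul_sum, Finset.mul_sum]
    _ ≤ C * (ε/(2*C)) + C * (ε/(2*C)) := by
        apply add_le_add <;> exact mul_le_mul_of_nonneg_left (by assumption) hCpos.le
    _ = ε := by field_simp; ring

lemma deriv_eps {f : ℝ → ℝ} {x ε : ℝ} (h : HasDerivAt f 0 x) (hε : 0 < ε) :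
    ∃ η > 0, ∀ y, |y - x| < η → |f y - f x| ≤ ε * |y - x| := by
  have h2 := Asymptotics.isLittleO_iff.mp (hasDerivAt_iff_isLittleO.mp h) hε
  simp only [smul_zero, sub_zero] at h2
  obtain ⟨η, hη, h3⟩ := Metric.eventually_nhds_iff.mp h2
  exact ⟨η, hη, fun y hy => by
    simpa [Real.dist_eq, Real.norm_eq_abs] using h3 (show dist y x < η by simpa [Real.dist_eq] using hy)⟩

lemma main_est {a b s t ε : ℝ} {f : ℝ → ℝ} (hf : AbsContOn a b f)
    (hd : ∀ᵐ τ : ℝ, τ ∈ Icc a b → HasDerivAt f 0 τ)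
    (hs : s ∈ Icc a b) (ht : t ∈ Icc a b) (hst : s ≤ t) (hε : 0 < ε) :
    |f t - f s| ≤ ε * (t - s) + ε := by
  obtain ⟨δ, hδ, hAC⟩ := hf ε hε
  set E := {r : ℝ | HasDerivAt f 0 r} with hE
  have hN : volume (Icc s t \ E) = 0 := by
    refine measure_mono_null (fun r hr => ?_) (ae_iff.mp hd)
    simp only [mem_setOf_eq, Classical.not_imp]
    exact ⟨⟨hs.1.trans hr.1.1, hr.1.2.trans ht.2⟩, hr.2⟩
  obtain ⟨U, hNU, hUopen, hUvol⟩ :=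
    (Icc s t \ E).exists_isOpen_lt_of_lt (ENNReal.ofReal δ)
      (by rw [hN]; exact ENNReal.ofReal_pos.2 hδ)
  set P : ℝ → Prop := fun r => ∃ (n : ℕ) (c d : Fin n → ℝ),
    (∀ j, s ≤ c j ∧ c j ≤ d j ∧ d j ≤ r) ∧
    (Pairwise fun i j => Disjoint (Set.Ioo (c i) (d i)) (Set.Ioo (c j) (d j))) ∧
    (∀ j, Ioo (c j) (d j) ⊆ U) ∧
    |f r - f s| ≤ ε * (r - s) + ∑ j, |f (d j) - f (c j)| with hP
  set S := {r | r ∈ Icc s t ∧ P r} with hS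
  have hsS : s ∈ S := by
    refine ⟨⟨le_rfl, hst⟩, 0, Fin.elim0, Fin.elim0, fun j => j.elim0, fun i => i.elim0,
      fun j => j.elim0, by simp⟩
  have hSne : S.Nonempty := ⟨s, hsS⟩
  have hbdd : BddAbove S := ⟨t, fun r hr => hr.1.2⟩
  set c0 := sSup S with hc0
  have hc0s : s ≤ c0 := le_csSup hbdd hsS
  have hc0t : c0 ≤ t := csSup_le hSne (fun r hr => hr.1.2)
  -- lemma A: append an interval inside U
  have lemA : ∀ r' ∈ S, ∀ r, r' ≤ r → r ≤ t → Ioo r' r ⊆ U → r ∈ S := by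
    rintro r' ⟨⟨hsr', hr't⟩, n, c, d, hcd, hdisj, hsub, hest⟩ r hr'r hrt hIoo
    refine ⟨⟨hsr'.trans hr'r, hrt⟩, n+1, Fin.cons r' c, Fin.cons r d, ?_, ?_, ?_, ?_⟩
    · intro j
      refine Fin.cases ?_ (fun i => ?_) j
      · simpa using ⟨hsr', hr'r⟩
      · simpa using ⟨(hcd i).1, (hcd i).2.1, (hcd i).2.2.trans hr'r⟩
    · have hd0 : ∀ i : Fin n, Disjoint (Ioo r' r) (Ioo (c i) (d i)) := by
        intro i
        refine Set.disjoint_left.2 fun y hy1 hy2 => ?_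
        have := (hcd i).2.2
        have := hy1.1
        have := hy2.2
        linarith
      intro i j hij
      rcases Fin.eq_zero_or_eq_succ i with rfl | ⟨i', rfl⟩ <;>
        rcases Fin.eq_zero_or_eq_succ j with rfl | ⟨j', rfl⟩
      · exact absurd rfl hij
      · simp only [Fin.cons_zero, Fin.cons_succ]; exact hd0 j'
      · simp only [Fin.cons_zero, Fin.cons_succ]; exact (hd0 i').symm
      · simp only [Fin.cons_succ]
        exact hdisj fun h => hij (by rw [h])
    · intro j
      refine Fin.cases ?_ (fun i => ?_) j
      · simpa using hIoo
      · simpa using hsub i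
    · have h1 : |f r - f s| ≤ |f r - f r'| + |f r' - f s| := abs_sub_le _ _ _
      have h2 : ε * (r' - s) ≤ ε * (r - s) := by nlinarith
      have h3 : ∑ j : Fin (n+1), |f ((Fin.cons r d : Fin (n+1) → ℝ) j) - f ((Fin.cons r' c : Fin (n+1) → ℝ) j)|
          = |f r - f r'| + ∑ j : Fin n, |f (d j) - f (c j)| := by
        rw [Fin.sum_univ_succ]; simp
      rw [h3]; linarith
  -- lemma B: extend using a pointwise derivative bound
  have lemB : ∀ r' ∈ S, ∀ r, r' ≤ r → r ≤ t → |f r - f r'| ≤ ε * (r - r') → r ∈ S := by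
    rintro r' ⟨⟨hsr', hr't⟩, n, c, d, hcd, hdisj, hsub, hest⟩ r hr'r hrt hder
    refine ⟨⟨hsr'.trans hr'r, hrt⟩, n, c, d,
      fun j => ⟨(hcd j).1, (hcd j).2.1, (hcd j).2.2.trans hr'r⟩, hdisj, hsub, ?_⟩
    have h1 : |f r - f s| ≤ |f r - f r'| + |f r' - f s| := abs_sub_le _ _ _
    linarith
  have hUball : ∀ r ∈ Icc s t, r ∉ E → ∃ η > 0, ∀ y, |y - r| < η → y ∈ U := by
    intro r hr hrE
    obtain ⟨η, hη, hball⟩ := Metric.isOpen_iff.mp hUopen r (hNU ⟨hr, hrE⟩)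
    exact ⟨η, hη, fun y hy => hball (by simpa [Real.dist_eq] using hy)⟩
  -- the sup is in S
  have hc0S : c0 ∈ S := by
    by_cases hE : c0 ∈ E
    · obtain ⟨η, hη, hb⟩ := deriv_eps hE hε
      obtain ⟨r', hr'S, hr'⟩ := exists_lt_of_lt_csSup hSne (show c0 - η < c0 by linarith)
      have hr'le : r' ≤ c0 := le_csSup hbdd hr'S
      refine lemB r' hr'S c0 hr'le hc0t ?_
      have := hb r' (by rw [abs_sub_lt_iff]; constructor <;> linarith)
      calc |f c0 - f r'| = |f r' - f c0| := abs_sub_comm _ _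
        _ ≤ ε * |r' - c0| := this
        _ = ε * (c0 - r') := by rw [abs_sub_comm, abs_of_nonneg (by linarith)]
    · obtain ⟨η, hη, hb⟩ := hUball c0 ⟨hc0s, hc0t⟩ hE
      obtain ⟨r', hr'S, hr'⟩ := exists_lt_of_lt_csSup hSne (show c0 - η < c0 by linarith)
      have hr'le : r' ≤ c0 := le_csSup hbdd hr'S
      refine lemA r' hr'S c0 hr'le hc0t fun y hy => hb y ?_
      rw [abs_sub_lt_iff]; constructor <;> [linarith [hy.2]; linarith [hy.1]]
  -- the sup is t
  have hc0eq : c0 = t := by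
    by_contra hne
    have hlt : c0 < t := lt_of_le_of_ne hc0t hne
    by_cases hE : c0 ∈ E
    · obtain ⟨η, hη, hb⟩ := deriv_eps hE hε
      set r := min t (c0 + η/2) with hr
      have h1 : c0 < r := lt_min hlt (by linarith)
      have hrS : r ∈ S := by
        refine lemB c0 hc0S r h1.le (min_le_left _ _) ?_
        have := hb r (by rw [abs_sub_lt_iff]; constructor <;>
          [linarith [min_le_right t (c0 + η/2)]; linarith])
        calc |f r - f c0| ≤ ε * |r - c0| := this
          _ = ε * (r - c0) := by rw [abs_of_nonneg (by linarith)]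
      exact absurd (le_csSup hbdd hrS) (not_le.2 h1)
    · obtain ⟨η, hη, hb⟩ := hUball c0 ⟨hc0s, hc0t⟩ hE
      set r := min t (c0 + η/2) with hr
      have h1 : c0 < r := lt_min hlt (by linarith)
      have hrS : r ∈ S := by
        refine lemA c0 hc0S r h1.le (min_le_left _ _) fun y hy => hb y ?_
        rw [abs_sub_lt_iff]
        constructor
        · have := hy.2
          have := min_le_right t (c0 + η/2)
          linarith
        · linarith [hy.1]
      exact absurd (le_csSup hbdd hrS) (not_le.2 h1)
  -- conclude
  obtain ⟨n, c, d, hcd, hdisj, hsubU, hest⟩ : P t := hc0eq ▸ hc0S.2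
  have hlen : ∑ j, (d j - c j) ≤ δ := by
    have hpd : ((Finset.univ : Finset (Fin n)) : Set (Fin n)).PairwiseDisjoint
        (fun j => Ioo (c j) (d j)) := fun i _ j _ hij => hdisj hij
    have hm : ∑ j, volume (Ioo (c j) (d j))
        = volume (⋃ j ∈ (Finset.univ : Finset (Fin n)), Ioo (c j) (d j)) :=
      (measure_biUnion_finset hpd (fun j _ => measurableSet_Ioo)).symm
    have hle : volume (⋃ j ∈ (Finset.univ : Finset (Fin n)), Ioo (c j) (d j)) ≤ volume U :=
      measure_mono (Set.iUnion₂_subset fun j _ => hsubU j)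
    have h1 : ENNReal.ofReal (∑ j, (d j - c j)) ≤ ENNReal.ofReal δ := by
      rw [ENNReal.ofReal_sum_of_nonneg (fun j _ => sub_nonneg.2 (hcd j).2.1)]
      calc ∑ j, ENNReal.ofReal (d j - c j) = ∑ j, volume (Ioo (c j) (d j)) := by
            simp [Real.volume_Ioo]
        _ ≤ volume U := hm ▸ hle
        _ ≤ ENNReal.ofReal δ := hUvol.le
    exact (ENNReal.ofReal_le_ofReal_iff hδ.le).mp h1
  have hACres := hAC n c d
    (fun j => ⟨hs.1.trans (hcd j).1, (hcd j).2.1, (hcd j).2.2.trans ht.2⟩) hdisj hlen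
  linarith

lemma const_of_ac {a b : ℝ} {f : ℝ → ℝ} (hf : AbsContOn a b f)
    (hd : ∀ᵐ τ : ℝ, τ ∈ Icc a b → HasDerivAt f 0 τ) :
    ∀ s ∈ Icc a b, ∀ t ∈ Icc a b, f s = f t := by
  have key : ∀ s ∈ Icc a b, ∀ t ∈ Icc a b, s ≤ t → f s = f t := by
    intro s hs t ht hst
    by_contra hne
    have habs : 0 < |f t - f s| := abs_pos.2 (sub_ne_zero.2 fun h => hne h.symm)
    have hpos : (0:ℝ) < 2 * (t - s + 1) := by linarith
    set ε := |f t - f s| / (2 * (t - s + 1)) with hε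
    have hεpos : 0 < ε := div_pos habs hpos
    have h1 := main_est hf hd hs ht hst hεpos
    have h2 : ε * (t - s) + ε = |f t - f s| / 2 := by
      have h3 : ε * (2 * (t - s + 1)) = |f t - f s| := by
        rw [hε]; exact div_mul_cancel₀ _ hpos.ne'
      linear_combination h3 / 2
    linarith
  intro s hs t ht
  rcases le_total s t with h | h
  · exact key s hs t ht h
  · exact (key t ht s hs h).symm

lemma quad_max {p0 q u : ℝ} (hp0 : p0 ≤ 0)
    (h : ∀ v : ℝ, p0 * v ^ 2 + q * v ≤ p0 * u ^ 2 + q * u) :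
    2 * p0 * u + q = 0 := by
  have h1p : (0:ℝ) < 1 - p0 := by linarith
  set e : ℝ := (2 * (1 - p0))⁻¹ with he
  have hepos : 0 < e := by positivity
  have hpe : p0 * e = e - 1/2 := by rw [he]; field_simp; ring
  set c : ℝ := 2 * p0 * u + q with hc
  have h1 := h (u + c * e)
  have hdiff : p0 * (u + c * e) ^ 2 + q * (u + c * e) - (p0 * u ^ 2 + q * u)
      = c ^ 2 * e + p0 * e * (c ^ 2 * e) := by rw [hc]; ring
  have hpe2 : p0 * e * (c ^ 2 * e) = (e - 1/2) * (c ^ 2 * e) := by rw [hpe]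
  have he2 : 0 < e / 2 + e ^ 2 := by positivity
  clear_value c e
  clear he hc hpe h
  have hsq : c ^ 2 * (e / 2 + e ^ 2) ≤ 0 := by nlinarith [h1, hdiff, hpe2]
  have hc2 : c ^ 2 ≤ 0 := by nlinarith [hsq, he2]
  exact (pow_eq_zero_iff two_ne_zero).mp (le_antisymm hc2 (sq_nonneg _))

lemma max_cond {X1 X2 X3 X4 U1 U2 p0 P1 P2 P3 P4 : ℝ} (hp0 : p0 ≤ 0)
    (hmax : ∀ v1 v2 : ℝ, H7 X1 X2 X3 X4 v1 v2 p0 P1 P2 P3 P4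
      ≤ H7 X1 X2 X3 X4 U1 U2 p0 P1 P2 P3 P4) :
    2 * p0 * U1 + P3 = 0 ∧ 2 * p0 * U2 + P4 = 0 := by
  constructor
  · refine quad_max hp0 fun v => ?_
    have := hmax v U2
    simp only [H7] at this
    nlinarith [this]
  · refine quad_max hp0 fun v => ?_
    have := hmax U1 v
    simp only [H7] at this
    nlinarith [this]

theorem stmt_9 (a b : ℝ) (hab : a < b) (x1 x2 x3 x4 u1 u2 : ℝ → ℝ) (p0 : ℝ)
    (p1 p2 p3 p4 : ℝ → ℝ)
    (hext : IsExtremal8 a b x1 x2 x3 x4 u1 u2 p0 p1 p2 p3 p4) :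
    ∀ t1 ∈ Set.Icc a b, ∀ t2 ∈ Set.Icc a b,
      -p1 t1 * x2 t1 + p2 t1 * x1 t1 - p3 t1 * x4 t1 + p4 t1 * x3 t1 =
      -p1 t2 * x2 t2 + p2 t2 * x1 t2 - p3 t2 * x4 t2 + p4 t2 * x3 t2 := by
  obtain ⟨hx1, hx2, hx3, hx4, hq1, hq2, hq3, hq4, -, -, -, hp0, -, hsys⟩ := hext
  have hFAC : AbsContOn a b
      (fun t => -p1 t * x2 t + p2 t * x1 t - p3 t * x4 t + p4 t * x3 t) :=
    (((hq1.neg.mul hab.le hx2).add (hq2.mul hab.le hx1)).sub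
      (hq3.mul hab.le hx4)).add (hq4.mul hab.le hx3)
  have hae : ∀ᵐ τ : ℝ, τ ∈ Set.Icc a b → HasDerivAt
      (fun t => -p1 t * x2 t + p2 t * x1 t - p3 t * x4 t + p4 t * x3 t) 0 τ := by
    filter_upwards [hsys] with τ hτ
    intro hmem
    obtain ⟨h1, h2, h3, h4, h5, h6, h7, h8, hmax⟩ := hτ hmem
    obtain ⟨hc1, hc2⟩ := max_cond hp0 hmax
    have hF := (((h5.neg.mul h2).add (h6.mul h1)).sub (h7.mul h4)).add (h8.mul h3)
    refine hF.congr_deriv ?_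
    linear_combination (norm := skip) (u1 τ) * hc2 - (u2 τ) * hc1
    simp only [Pi.neg_apply]
    ring
  intro t1 ht1 t2 ht2
  exact const_of_ac hFAC hae t1 ht1 t2 ht2
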